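/- Let Q be a local ring of positive Krull dimension and R = Q[[X]]/(X²). Then the R-module R/(X) is totally reflexive and not free, and there are infinitely many pairwise non-isomorphic indecomposable totally reflexive R-modules. -/

import Mathlib

open CategoryTheory Opposite TensorProduct

universe u

set_option synthInstance.maxHeartbeats 800000
set_option maxHeartbeats 1600000

noncomputable section

/-- `Ext^i_R(M, N) = 0`. -/
def ExtVanishes (R : Type u) [CommRing R] (M N : ModuleCat.{u} R) (i : ℕ) : Prop :=
  Subsingleton (((Ext R (ModuleCat.{u} R) i).obj (op M)).obj N)

/-- `Tor_i^R(M, N) = 0`. -/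
def TorVanishes (R : Type u) [CommRing R] (M N : ModuleCat.{u} R) (i : ℕ) : Prop :=
  Subsingleton (((Tor (ModuleCat.{u} R) i).obj M).obj N)

/-- `G` is totally reflexive: it is the cokernel of a differential in an exact complex `F`
of finitely generated free modules such that `Hom_R(F, R)` is also exact. -/
def IsTotallyReflexive (R : Type u) [CommRing R] (G : ModuleCat.{u} R) : Prop :=
  ∃ (F : ℤ → ModuleCat.{u} R) (d : ∀ i : ℤ, F (i + 1) ⟶ F i),
    (∀ i, Module.Free R (F i)) ∧ (∀ i, Module.Finite R (F i)) ∧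
    (∀ i, LinearMap.range (d (i + 1)).hom = LinearMap.ker (d i).hom) ∧
    (∀ i, LinearMap.range (LinearMap.dualMap (d i).hom) =
      LinearMap.ker (LinearMap.dualMap (d (i + 1)).hom)) ∧
    Nonempty (G ≃ₗ[R] (↥(F 0) ⧸ LinearMap.range (d 0).hom))

/-- `M` is an indecomposable module. -/
def IsIndecomposable (R : Type u) [CommRing R] (M : ModuleCat.{u} R) : Prop :=
  Nontrivial M ∧ ∀ Z W : Submodule R M, IsCompl Z W → Z = ⊥ ∨ W = ⊥

/-- The ring `R = Q⟦X⟧/(X²)`. -/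
abbrev Rq (Q : Type u) [CommRing Q] : Type u :=
  (PowerSeries Q) ⧸ (Ideal.span {(PowerSeries.X : PowerSeries Q) ^ 2})

/-- The image of `X` in `Q⟦X⟧/(X²)`. -/
def xR (Q : Type u) [CommRing Q] : Rq Q :=
  Ideal.Quotient.mk _ (PowerSeries.X : PowerSeries Q)

namespace TotRefAux

open PowerSeries

variable (Q : Type u) [CommRing Q]

/-- The ideal `(X²)`. -/
abbrev II : Ideal (PowerSeries Q) := Ideal.span {(X : PowerSeries Q) ^ 2}

/-- The quotient map `Q⟦X⟧ → Q⟦X⟧/(X²)`. -/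
abbrev mkR : PowerSeries Q →+* Rq Q := Ideal.Quotient.mk (II Q)

variable {Q}

lemma mem_II {f : PowerSeries Q} : f ∈ II Q ↔ coeff 0 f = 0 ∧ coeff 1 f = 0 := by
  rw [Ideal.mem_span_singleton]
  rw [X_pow_dvd_iff]
  constructor
  · intro h; exact ⟨h 0 (by norm_num), h 1 (by norm_num)⟩
  · rintro ⟨h0, h1⟩ i hi
    interval_cases i <;> assumption

lemma mkR_eq_zero {f : PowerSeries Q} :
    mkR Q f = 0 ↔ coeff 0 f = 0 ∧ coeff 1 f = 0 := by
  rw [Ideal.Quotient.eq_zero_iff_mem, mem_II]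

lemma mkR_surj : Function.Surjective (mkR Q) := Ideal.Quotient.mk_surjective

lemma xR_eq : xR Q = mkR Q X := rfl

lemma x_mul_x : xR Q * xR Q = 0 := by
  rw [xR_eq, ← map_mul, ← pow_two]
  exact Ideal.Quotient.eq_zero_iff_mem.mpr (Ideal.subset_span rfl)

lemma x_ne_zero [Nontrivial Q] : xR Q ≠ 0 := by
  rw [xR_eq, Ne, mkR_eq_zero]
  rintro ⟨-, h1⟩
  simp at h1

lemma exists_eq_X_mul {f : PowerSeries Q} (h : coeff 0 f = 0) :
    ∃ g, f = X * g := by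
  have : (X : PowerSeries Q) ∣ f := X_dvd_iff.mpr (by
    rwa [← coeff_zero_eq_constantCoeff_apply])
  exact this

lemma x_mul_mk_eq_zero {f : PowerSeries Q} :
    xR Q * mkR Q f = 0 ↔ coeff 0 f = 0 := by
  rw [xR_eq, ← map_mul, mkR_eq_zero]
  have h0 : coeff 0 (X * f) = 0 := by
    rw [coeff_zero_eq_constantCoeff_apply, map_mul, constantCoeff_X, zero_mul]
  have h1 : coeff 1 (X * f) = coeff 0 f := coeff_succ_X_mul 0 f
  rw [h0, h1]
  simp

lemma ann_x {r : Rq Q} : r * xR Q = 0 ↔ r ∈ Ideal.span {xR Q} := by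
  rw [Ideal.mem_span_singleton]
  constructor
  · intro h
    obtain ⟨f, rfl⟩ := mkR_surj r
    rw [mul_comm, x_mul_mk_eq_zero] at h
    obtain ⟨g, rfl⟩ := exists_eq_X_mul h
    exact ⟨mkR Q g, by rw [map_mul, xR_eq]⟩
  · rintro ⟨c, rfl⟩
    calc xR Q * c * xR Q = c * (xR Q * xR Q) := by ring
    _ = 0 := by rw [x_mul_x, mul_zero]

variable (Q)

/-- The map `(u, v) ↦ (xu + ev, xv)` on `R²`. -/
def Lmap (e : Rq Q) : (Rq Q × Rq Q) →ₗ[Rq Q] (Rq Q × Rq Q) where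
  toFun v := (xR Q * v.1 + e * v.2, xR Q * v.2)
  map_add' v w := by
    ext <;> simp <;> ring
  map_smul' r v := by
    ext <;> simp [smul_eq_mul] <;> ring

/-- The map `(u, v) ↦ (xu, eu + xv)` on `R²`. -/
def L'map (e : Rq Q) : (Rq Q × Rq Q) →ₗ[Rq Q] (Rq Q × Rq Q) where
  toFun v := (xR Q * v.1, e * v.1 + xR Q * v.2)
  map_add' v w := by
    ext <;> simp <;> ring
  map_smul' r v := by
    ext <;> simp [smul_eq_mul] <;> ring

variable {Q}

@[simp] lemma Lmap_apply (e : Rq Q) (v : Rq Q × Rq Q) :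
    Lmap Q e v = (xR Q * v.1 + e * v.2, xR Q * v.2) := rfl

@[simp] lemma L'map_apply (e : Rq Q) (v : Rq Q × Rq Q) :
    L'map Q e v = (xR Q * v.1, e * v.1 + xR Q * v.2) := rfl

lemma Lmap_Lmap (e : Rq Q) (v : Rq Q × Rq Q) : Lmap Q e (Lmap Q (-e) v) = 0 := by
  have h := x_mul_x (Q := Q)
  simp only [Lmap_apply]
  have h1 : xR Q * (xR Q * v.1 + -e * v.2) + e * (xR Q * v.2) = 0 := by
    linear_combination v.1 * h
  have h2 : xR Q * (xR Q * v.2) = 0 := by linear_combination v.2 * h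
  rw [h1, h2]; rfl

lemma L'map_L'map (e : Rq Q) (v : Rq Q × Rq Q) : L'map Q e (L'map Q (-e) v) = 0 := by
  have h := x_mul_x (Q := Q)
  simp only [L'map_apply]
  have h1 : xR Q * (xR Q * v.1) = 0 := by linear_combination v.1 * h
  have h2 : e * (xR Q * v.1) + xR Q * (-e * v.1 + xR Q * v.2) = 0 := by
    linear_combination v.2 * h
  rw [h1, h2]; rfl

lemma ker_Lmap (e : Rq Q) :
    LinearMap.ker (Lmap Q e) = LinearMap.range (Lmap Q (-e)) := by
  ext v
  simp only [LinearMap.mem_ker, LinearMap.mem_range]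
  constructor
  · intro hv
    obtain ⟨f1, hf1⟩ := mkR_surj v.1
    obtain ⟨f2, hf2⟩ := mkR_surj v.2
    obtain ⟨g, hg⟩ := mkR_surj e
    have h1 : xR Q * v.1 + e * v.2 = 0 := congrArg Prod.fst hv
    have h2 : xR Q * v.2 = 0 := congrArg Prod.snd hv
    rw [← hf2, x_mul_mk_eq_zero] at h2
    obtain ⟨h, hh⟩ := exists_eq_X_mul h2
    have key : coeff 0 (f1 + g * h) = 0 := by
      have e1 : mkR Q (X * (f1 + g * h)) = 0 := by
        have : mkR Q (X * (f1 + g * h)) =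
            xR Q * mkR Q f1 + mkR Q g * (xR Q * mkR Q h) := by
          rw [xR_eq, map_mul, map_add, map_mul]; ring
        rw [this, hf1, hg]
        have : xR Q * mkR Q h = v.2 := by rw [← hf2, hh, xR_eq, map_mul]
        rw [this]; exact h1
      rw [mkR_eq_zero] at e1
      have := e1.2
      rwa [coeff_succ_X_mul] at this
    obtain ⟨k, hk⟩ := exists_eq_X_mul key
    refine ⟨(mkR Q k, mkR Q h), ?_⟩
    have c1 : xR Q * mkR Q k + -e * mkR Q h = v.1 := by
      have hf1' : X * k - g * h = f1 := by linear_combination -hk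
      rw [← hf1, ← hg, xR_eq, ← hf1', map_sub, map_mul, map_mul]
      ring
    have c2 : xR Q * mkR Q h = v.2 := by rw [← hf2, hh, xR_eq, map_mul]
    rw [Lmap_apply]
    exact Prod.ext c1 c2
  · rintro ⟨w, rfl⟩
    exact Lmap_Lmap e w

lemma ker_L'map (e : Rq Q) :
    LinearMap.ker (L'map Q e) = LinearMap.range (L'map Q (-e)) := by
  ext v
  simp only [LinearMap.mem_ker, LinearMap.mem_range]
  constructor
  · intro hv
    obtain ⟨f1, hf1⟩ := mkR_surj v.1
    obtain ⟨f2, hf2⟩ := mkR_surj v.2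
    obtain ⟨g, hg⟩ := mkR_surj e
    have h1 : xR Q * v.1 = 0 := congrArg Prod.fst hv
    have h2 : e * v.1 + xR Q * v.2 = 0 := congrArg Prod.snd hv
    rw [← hf1, x_mul_mk_eq_zero] at h1
    obtain ⟨h, hh⟩ := exists_eq_X_mul h1
    have key : coeff 0 (g * h + f2) = 0 := by
      have e1 : mkR Q (X * (g * h + f2)) = 0 := by
        have : mkR Q (X * (g * h + f2)) =
            mkR Q g * (xR Q * mkR Q h) + xR Q * mkR Q f2 := by
          rw [xR_eq, map_mul, map_add, map_mul]; ring
        rw [this, hf2, hg]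
        have : xR Q * mkR Q h = v.1 := by rw [← hf1, hh, xR_eq, map_mul]
        rw [this]; exact h2
      rw [mkR_eq_zero] at e1
      have := e1.2
      rwa [coeff_succ_X_mul] at this
    obtain ⟨k, hk⟩ := exists_eq_X_mul key
    refine ⟨(mkR Q h, mkR Q k), ?_⟩
    have c1 : xR Q * mkR Q h = v.1 := by rw [← hf1, hh, xR_eq, map_mul]
    have c2 : -e * mkR Q h + xR Q * mkR Q k = v.2 := by
      have hf2' : X * k - g * h = f2 := by linear_combination -hk
      rw [← hf2, ← hg, xR_eq, ← hf2', map_sub, map_mul, map_mul]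
      ring
    rw [L'map_apply]
    exact Prod.ext c1 c2
  · rintro ⟨w, rfl⟩
    exact L'map_L'map e w

lemma pair_decomp (w : Rq Q × Rq Q) :
    w = w.1 • ((1 : Rq Q), (0 : Rq Q)) + w.2 • ((0 : Rq Q), (1 : Rq Q)) := by
  ext <;> simp

lemma dual_apply (f : Module.Dual (Rq Q) (Rq Q × Rq Q)) (w : Rq Q × Rq Q) :
    f w = w.1 * f (1, 0) + w.2 * f (0, 1) := by
  conv_lhs => rw [pair_decomp w]
  rw [map_add, map_smul, map_smul, smul_eq_mul, smul_eq_mul]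

lemma dual_ker_char (e : Rq Q) (f : Module.Dual (Rq Q) (Rq Q × Rq Q)) :
    f ∈ LinearMap.ker (LinearMap.dualMap (Lmap Q e)) ↔
      (xR Q * f (1, 0) = 0 ∧ e * f (1, 0) + xR Q * f (0, 1) = 0) := by
  rw [LinearMap.mem_ker]
  constructor
  · intro hf
    have h1 : f (Lmap Q e (1, 0)) = 0 := by
      rw [show f (Lmap Q e (1,0)) = (LinearMap.dualMap (Lmap Q e) f) (1,0) from rfl, hf]
      rfl
    have h2 : f (Lmap Q e (0, 1)) = 0 := by
      rw [show f (Lmap Q e (0,1)) = (LinearMap.dualMap (Lmap Q e) f) (0,1) from rfl, hf]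
      rfl
    rw [Lmap_apply] at h1 h2
    simp only [mul_one, mul_zero, add_zero, zero_add] at h1 h2
    rw [dual_apply f (xR Q, 0)] at h1
    rw [dual_apply f (e, xR Q)] at h2
    simp only [mul_zero, zero_mul, add_zero] at h1
    exact ⟨h1, h2⟩
  · rintro ⟨h1, h2⟩
    apply LinearMap.ext
    intro w
    rw [LinearMap.dualMap_apply, LinearMap.zero_apply]
    rw [dual_apply f (Lmap Q e w), Lmap_apply]
    simp only
    linear_combination w.1 * h1 + w.2 * h2

lemma dual_range_char (e : Rq Q) (f : Module.Dual (Rq Q) (Rq Q × Rq Q)) :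
    f ∈ LinearMap.range (LinearMap.dualMap (Lmap Q e)) ↔
      ∃ s t : Rq Q, f (1, 0) = xR Q * s ∧ f (0, 1) = e * s + xR Q * t := by
  constructor
  · rintro ⟨g, rfl⟩
    refine ⟨g (1, 0), g (0, 1), ?_, ?_⟩
    · rw [LinearMap.dualMap_apply, Lmap_apply]
      simp only [mul_one, mul_zero, add_zero]
      rw [dual_apply g (xR Q, 0)]
      simp [mul_comm]
    · rw [LinearMap.dualMap_apply, Lmap_apply]
      simp only [mul_zero, mul_one, zero_add]
      rw [dual_apply g (e, xR Q)]
  · rintro ⟨s, t, h1, h2⟩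
    refine ⟨{ toFun := fun w => w.1 * s + w.2 * t
              map_add' := by intro v w; simp; ring
              map_smul' := by intro r v; simp [smul_eq_mul]; ring }, ?_⟩
    apply LinearMap.ext
    intro w
    rw [LinearMap.dualMap_apply]
    rw [dual_apply f w, h1, h2]
    simp only [LinearMap.coe_mk, AddHom.coe_mk, Lmap_apply]
    ring

lemma dual_Lmap (e : Rq Q) :
    LinearMap.range (LinearMap.dualMap (Lmap Q e)) =
      LinearMap.ker (LinearMap.dualMap (Lmap Q (-e))) := by
  ext f
  rw [dual_range_char, dual_ker_char]
  constructor
  · rintro ⟨s, t, h1, h2⟩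
    have hx := x_mul_x (Q := Q)
    constructor
    · rw [h1]; linear_combination s * hx
    · rw [h1, h2]; linear_combination t * hx
  · rintro ⟨h1, h2⟩
    have hmem : (f (1, 0), f (0, 1)) ∈ LinearMap.ker (L'map Q (-e)) := by
      rw [LinearMap.mem_ker, L'map_apply]
      have : -e * f (1, 0) + xR Q * f (0, 1) = 0 := by linear_combination h2
      rw [h1, this]; rfl
    rw [ker_L'map, neg_neg] at hmem
    obtain ⟨w, hw⟩ := hmem
    rw [L'map_apply] at hw
    exact ⟨w.1, w.2, (congrArg Prod.fst hw).symm, (congrArg Prod.snd hw).symm⟩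


section MQModule

lemma coeff_one_mul (f g : PowerSeries Q) :
    coeff 1 (f * g) = coeff 0 f * coeff 1 g + coeff 1 f * coeff 0 g := by
  rw [coeff_mul]
  rw [show (Finset.HasAntidiagonal.antidiagonal 1 : Finset (ℕ × ℕ)) = {(0, 1), (1, 0)} from rfl]
  rw [Finset.sum_insert (by decide), Finset.sum_singleton]

lemma coeff_zero_mul' (f g : PowerSeries Q) :
    coeff 0 (f * g) = coeff 0 f * coeff 0 g := by
  simp only [coeff_zero_eq_constantCoeff_apply, map_mul]

variable (Q)

/-- The representation of `Q⟦X⟧` on `Q²` sending `X` to `[[0, -c], [0, 0]]`. -/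
def rho0 (c : Q) : PowerSeries Q →+* Module.End Q (Q × Q) where
  toFun f :=
    { toFun := fun v => (coeff 0 f * v.1 - c * coeff 1 f * v.2, coeff 0 f * v.2)
      map_add' := fun v w => by
        apply Prod.ext <;> simp <;> ring
      map_smul' := fun a v => by
        apply Prod.ext <;> simp [smul_eq_mul] <;> ring }
  map_one' := by
    apply LinearMap.ext; intro v
    apply Prod.ext <;> simp
  map_zero' := by
    apply LinearMap.ext; intro v
    apply Prod.ext <;> simp
  map_add' f g := by
    apply LinearMap.ext; intro v
    apply Prod.ext <;> simp <;> ring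
  map_mul' f g := by
    apply LinearMap.ext; intro v
    apply Prod.ext <;>
      simp only [LinearMap.coe_mk, AddHom.coe_mk, Module.End.mul_apply,
        coeff_one_mul, coeff_zero_mul'] <;> ring

@[simp] lemma rho0_apply (c : Q) (f : PowerSeries Q) (v : Q × Q) :
    rho0 Q c f v = (coeff 0 f * v.1 - c * coeff 1 f * v.2, coeff 0 f * v.2) := rfl

/-- The representation of `R = Q⟦X⟧/(X²)` on `Q²` sending `x` to `[[0, -c], [0, 0]]`. -/
def rhoR (c : Q) : Rq Q →+* Module.End Q (Q × Q) :=
  Ideal.Quotient.lift (II Q) (rho0 Q c) (by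
    intro f hf
    rw [mem_II] at hf
    apply LinearMap.ext; intro v
    apply Prod.ext <;>
      simp only [rho0_apply, hf.1, hf.2, LinearMap.zero_apply, mul_zero, zero_mul,
        sub_zero, Prod.fst_zero, Prod.snd_zero, add_zero])

/-- The module `R²/((x, 0), (c, x))` realized as `Q²` with `x` acting by `[[0, -c], [0, 0]]`. -/
@[nolint unusedArguments]
def MQ (c : Q) : Type u := Q × Q

instance (c : Q) : AddCommGroup (MQ Q c) := inferInstanceAs (AddCommGroup (Q × Q))

instance (c : Q) [Nontrivial Q] : Nontrivial (MQ Q c) :=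
  inferInstanceAs (Nontrivial (Q × Q))

instance instMQModule (c : Q) : Module (Rq Q) (MQ Q c) :=
  Module.compHom (Q × Q) (rhoR Q c)

variable {Q}

/-- Constructor for `MQ`. -/
def MQ.mk (c : Q) (a b : Q) : MQ Q c := (a, b)

/-- First component. -/
def MQ.fst {c : Q} (v : MQ Q c) : Q := Prod.fst (show Q × Q from v)

/-- Second component. -/
def MQ.snd {c : Q} (v : MQ Q c) : Q := Prod.snd (show Q × Q from v)

@[simp] lemma MQ.fst_mk (c : Q) (a b : Q) : MQ.fst (MQ.mk c a b) = a := rfl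
@[simp] lemma MQ.snd_mk (c : Q) (a b : Q) : MQ.snd (MQ.mk c a b) = b := rfl
@[simp] lemma MQ.fst_add {c : Q} (v w : MQ Q c) :
    MQ.fst (v + w) = MQ.fst v + MQ.fst w := rfl
@[simp] lemma MQ.snd_add {c : Q} (v w : MQ Q c) :
    MQ.snd (v + w) = MQ.snd v + MQ.snd w := rfl
@[simp] lemma MQ.fst_sub {c : Q} (v w : MQ Q c) :
    MQ.fst (v - w) = MQ.fst v - MQ.fst w := rfl
@[simp] lemma MQ.snd_sub {c : Q} (v w : MQ Q c) :
    MQ.snd (v - w) = MQ.snd v - MQ.snd w := rfl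
@[simp] lemma MQ.fst_zero {c : Q} : MQ.fst (0 : MQ Q c) = 0 := rfl
@[simp] lemma MQ.snd_zero {c : Q} : MQ.snd (0 : MQ Q c) = 0 := rfl

lemma MQ.ext {c : Q} {v w : MQ Q c} (h1 : MQ.fst v = MQ.fst w)
    (h2 : MQ.snd v = MQ.snd w) : v = w := Prod.ext h1 h2

lemma MQ.ext_iff {c : Q} {v w : MQ Q c} :
    v = w ↔ MQ.fst v = MQ.fst w ∧ MQ.snd v = MQ.snd w := by
  constructor
  · rintro rfl; exact ⟨rfl, rfl⟩
  · rintro ⟨h1, h2⟩; exact MQ.ext h1 h2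

lemma MQ_smul_mk (c : Q) (f : PowerSeries Q) (v : MQ Q c) :
    (mkR Q f) • v =
      MQ.mk c (coeff 0 f * MQ.fst v - c * coeff 1 f * MQ.snd v)
        (coeff 0 f * MQ.snd v) := rfl

lemma MQ_x_smul (c : Q) (v : MQ Q c) :
    (xR Q) • v = MQ.mk c (- (c * MQ.snd v)) 0 := by
  rw [xR_eq, MQ_smul_mk]
  apply MQ.ext <;> simp

/-- The algebra map `Q → R`. -/
def algQ : Q →+* Rq Q := (mkR Q).comp C

lemma MQ_algQ_smul (c : Q) (a : Q) (v : MQ Q c) :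
    (algQ a) • v = MQ.mk c (a * MQ.fst v) (a * MQ.snd v) := by
  rw [algQ, RingHom.comp_apply, MQ_smul_mk]
  apply MQ.ext <;> simp [coeff_C]

lemma MQ_decomp (c : Q) (v : MQ Q c) :
    v = (algQ (MQ.fst v)) • (MQ.mk c 1 0) + (algQ (MQ.snd v)) • (MQ.mk c 0 1) := by
  rw [MQ_algQ_smul, MQ_algQ_smul]
  apply MQ.ext <;> simp

end MQModule

section Indecomposable

lemma eq_zero_of_mul_unit {c u : Q} (h : c * u = 0) (hu : IsUnit u) : c = 0 := by
  obtain ⟨w, rfl⟩ := hu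
  have := congrArg (fun t => t * (↑w⁻¹ : Q)) h
  simpa [mul_assoc] using this

lemma isUnit_one_sub_of_nonunit [IsLocalRing Q] {a : Q} (ha : ¬ IsUnit a) :
    IsUnit (1 - a) := (IsLocalRing.isUnit_or_isUnit_one_sub_self a).resolve_left ha

lemma quarter [IsLocalRing Q] {c α β γ δ : Q} (hc : c ≠ 0)
    (h1 : α * α + γ * β = α) (h2 : α * γ + γ * δ = γ)
    (h3 : β * α + δ * β = β) (h4 : β * γ + δ * δ = δ)
    (hg : c * γ = 0) (had : c * (α - δ) = 0)
    (hα : ¬ IsUnit α) :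
    α = 0 ∧ β = 0 ∧ γ = 0 ∧ δ = 0 := by
  have hγ : ¬ IsUnit γ := fun h => hc (eq_zero_of_mul_unit hg h)
  have hαδ : ¬ IsUnit (α - δ) := fun h => hc (eq_zero_of_mul_unit had h)
  have hmm := IsLocalRing.mem_maximalIdeal (R := Q)
  have hαm : α ∈ IsLocalRing.maximalIdeal Q := (hmm α).mpr hα
  have hαδm : α - δ ∈ IsLocalRing.maximalIdeal Q := (hmm _).mpr hαδ
  have hδm : δ ∈ IsLocalRing.maximalIdeal Q := by
    have := Submodule.sub_mem _ hαm hαδm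
    simpa using this
  have hsum : α + δ ∈ IsLocalRing.maximalIdeal Q := Submodule.add_mem _ hαm hδm
  have hsumu : ¬ IsUnit (α + δ) := (hmm _).mp hsum
  have hu : IsUnit (1 - (α + δ)) := isUnit_one_sub_of_nonunit hsumu
  have hβ0 : β = 0 := by
    have : β * (1 - (α + δ)) = 0 := by linear_combination -h3
    exact eq_zero_of_mul_unit this hu
  have hγ0 : γ = 0 := by
    have : γ * (1 - (α + δ)) = 0 := by linear_combination -h2
    exact eq_zero_of_mul_unit this hu
  have hα0 : α = 0 := by
    have h1' : α * (1 - α) = 0 := by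
      rw [hγ0] at h1; linear_combination -h1
    exact eq_zero_of_mul_unit h1' (isUnit_one_sub_of_nonunit hα)
  have hδ0 : δ = 0 := by
    have hδu : ¬ IsUnit δ := (hmm _).mp hδm
    have h4' : δ * (1 - δ) = 0 := by
      rw [hγ0] at h4; linear_combination -h4
    exact eq_zero_of_mul_unit h4' (isUnit_one_sub_of_nonunit hδu)
  exact ⟨hα0, hβ0, hγ0, hδ0⟩

variable {c : Q}

@[simp] lemma MQ.mk_zero_zero : MQ.mk c 0 0 = (0 : MQ Q c) := rfl

@[simp] lemma MQ.mk_fst_snd (v : MQ Q c) : MQ.mk c (MQ.fst v) (MQ.snd v) = v := rfl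

lemma algQ_smul_mk (a x y : Q) :
    (algQ a) • (MQ.mk c x y) = MQ.mk c (a * x) (a * y) := by
  rw [MQ_algQ_smul]; simp

lemma pi_apply (π : MQ Q c →ₗ[Rq Q] MQ Q c) (v : MQ Q c) :
    π v = algQ (MQ.fst v) • π (MQ.mk c 1 0) + algQ (MQ.snd v) • π (MQ.mk c 0 1) := by
  conv_lhs => rw [MQ_decomp c v]
  rw [map_add, map_smul, map_smul]

lemma x_rel (π : MQ Q c →ₗ[Rq Q] MQ Q c) :
    c * MQ.snd (π (MQ.mk c 1 0)) = 0 ∧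
      c * MQ.fst (π (MQ.mk c 1 0)) = c * MQ.snd (π (MQ.mk c 0 1)) := by
  have hx1 : (xR Q) • (MQ.mk c 1 0) = 0 := by
    rw [MQ_x_smul]; simp
  have hx2 : (xR Q) • (MQ.mk c 0 1) = MQ.mk c (-c) 0 := by
    rw [MQ_x_smul]; simp
  constructor
  · have e1 : (0 : MQ Q c) = xR Q • π (MQ.mk c 1 0) := by
      rw [← map_smul, hx1, map_zero]
    rw [MQ_x_smul] at e1
    have h := congrArg MQ.fst e1.symm
    simpa [neg_eq_zero] using h
  · have e2 : π (xR Q • MQ.mk c 0 1) = xR Q • π (MQ.mk c 0 1) := map_smul π _ _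
    rw [hx2, MQ_x_smul, pi_apply π (MQ.mk c (-c) 0)] at e2
    simp only [MQ.fst_mk, MQ.snd_mk] at e2
    rw [MQ_algQ_smul, MQ_algQ_smul] at e2
    have h := congrArg MQ.fst e2
    simp only [MQ.fst_add, MQ.fst_mk] at h
    linear_combination -h

lemma idem_rels (π : MQ Q c →ₗ[Rq Q] MQ Q c) (hidem : ∀ v, π (π v) = π v) :
    MQ.fst (π (MQ.mk c 1 0)) * MQ.fst (π (MQ.mk c 1 0)) +
        MQ.snd (π (MQ.mk c 1 0)) * MQ.fst (π (MQ.mk c 0 1)) =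
        MQ.fst (π (MQ.mk c 1 0)) ∧
      MQ.fst (π (MQ.mk c 1 0)) * MQ.snd (π (MQ.mk c 1 0)) +
        MQ.snd (π (MQ.mk c 1 0)) * MQ.snd (π (MQ.mk c 0 1)) =
        MQ.snd (π (MQ.mk c 1 0)) ∧
      MQ.fst (π (MQ.mk c 0 1)) * MQ.fst (π (MQ.mk c 1 0)) +
        MQ.snd (π (MQ.mk c 0 1)) * MQ.fst (π (MQ.mk c 0 1)) =
        MQ.fst (π (MQ.mk c 0 1)) ∧
      MQ.fst (π (MQ.mk c 0 1)) * MQ.snd (π (MQ.mk c 1 0)) +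
        MQ.snd (π (MQ.mk c 0 1)) * MQ.snd (π (MQ.mk c 0 1)) =
        MQ.snd (π (MQ.mk c 0 1)) := by
  have k1 := hidem (MQ.mk c 1 0)
  have k2 := hidem (MQ.mk c 0 1)
  rw [pi_apply π (π (MQ.mk c 1 0))] at k1
  rw [pi_apply π (π (MQ.mk c 0 1))] at k2
  rw [MQ_algQ_smul, MQ_algQ_smul] at k1 k2
  have k1f := congrArg MQ.fst k1
  have k1s := congrArg MQ.snd k1
  have k2f := congrArg MQ.fst k2
  have k2s := congrArg MQ.snd k2
  simp only [MQ.fst_add, MQ.snd_add, MQ.fst_mk, MQ.snd_mk] at k1f k1s k2f k2s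
  exact ⟨k1f, k1s, k2f, k2s⟩

lemma entries_zero (π : MQ Q c →ₗ[Rq Q] MQ Q c)
    (h1 : π (MQ.mk c 1 0) = 0) (h2 : π (MQ.mk c 0 1) = 0) : π = 0 := by
  apply LinearMap.ext
  intro v
  rw [pi_apply, h1, h2, smul_zero, smul_zero, add_zero, LinearMap.zero_apply]

lemma idem_zero_or_id [IsLocalRing Q] (hc : c ≠ 0)
    (π : MQ Q c →ₗ[Rq Q] MQ Q c) (hidem : ∀ v, π (π v) = π v) :
    π = 0 ∨ π = LinearMap.id := by
  obtain ⟨h1, h2, h3, h4⟩ := idem_rels π hidem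
  obtain ⟨hg, hαδ⟩ := x_rel π
  set α := MQ.fst (π (MQ.mk c 1 0)) with hαdef
  set γ := MQ.snd (π (MQ.mk c 1 0)) with hγdef
  set β := MQ.fst (π (MQ.mk c 0 1)) with hβdef
  set δ := MQ.snd (π (MQ.mk c 0 1)) with hδdef
  have had : c * (α - δ) = 0 := by linear_combination hαδ
  have hγu : ¬ IsUnit γ := fun h => hc (eq_zero_of_mul_unit hg h)
  by_cases hα : IsUnit α
  · right
    -- consider 1 - π
    set π' := (LinearMap.id : MQ Q c →ₗ[Rq Q] MQ Q c) - π with hπ'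
    have hidem' : ∀ v, π' (π' v) = π' v := by
      intro v
      simp only [hπ', LinearMap.sub_apply, LinearMap.id_apply, map_sub, hidem]
      abel
    obtain ⟨h1', h2', h3', h4'⟩ := idem_rels π' hidem'
    obtain ⟨hg', hαδ'⟩ := x_rel π'
    have had' : c * (MQ.fst (π' (MQ.mk c 1 0)) - MQ.snd (π' (MQ.mk c 0 1))) = 0 := by
      linear_combination hαδ'
    have hα' : ¬ IsUnit (MQ.fst (π' (MQ.mk c 1 0))) := by
      have hfst' : MQ.fst (π' (MQ.mk c 1 0)) = 1 - α := by
        simp only [hπ', LinearMap.sub_apply, LinearMap.id_apply, MQ.fst_sub, MQ.fst_mk, hαdef]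
      rw [hfst']
      intro h
      have : IsUnit (α * (1 - α)) := hα.mul h
      have hαα : α * (1 - α) = γ * β := by linear_combination -h1
      rw [hαα] at this
      exact hγu (isUnit_of_mul_isUnit_left this)
    obtain ⟨z1, z2, z3, z4⟩ := quarter hc h1' h2' h3' h4' hg' had' hα'
    have e1 : π' (MQ.mk c 1 0) = 0 := by
      apply MQ.ext
      · rw [z1]; rfl
      · rw [z3]; rfl
    have e2 : π' (MQ.mk c 0 1) = 0 := by
      apply MQ.ext
      · rw [z2]; rfl
      · rw [z4]; rfl
    have : π' = 0 := entries_zero π' e1 e2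
    have := sub_eq_zero.mp (by rw [← hπ']; exact this)
    exact this.symm
  · left
    obtain ⟨z1, z2, z3, z4⟩ := quarter hc h1 h2 h3 h4 hg had hα
    refine entries_zero π ?_ ?_
    · apply MQ.ext
      · rw [← hαdef, z1]; rfl
      · rw [← hγdef, z3]; rfl
    · apply MQ.ext
      · rw [← hβdef, z2]; rfl
      · rw [← hδdef, z4]; rfl

lemma MQ_indec [IsLocalRing Q] (hc : c ≠ 0)
    (Z W : Submodule (Rq Q) (MQ Q c)) (hZW : IsCompl Z W) : Z = ⊥ ∨ W = ⊥ := by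
  set π : MQ Q c →ₗ[Rq Q] MQ Q c :=
    Z.subtype.comp (Z.projectionOnto W hZW) with hπ
  have hleft : ∀ z ∈ Z, π z = z := by
    intro z hz
    simp only [hπ, LinearMap.comp_apply]
    rw [show z = ((⟨z, hz⟩ : Z) : MQ Q c) from rfl,
      Submodule.projectionOnto_apply_left hZW]
    rfl
  have hright : ∀ w ∈ W, π w = 0 := by
    intro w hw
    simp only [hπ, LinearMap.comp_apply]
    rw [Submodule.projectionOnto_apply_of_mem_right hZW hw]
    rfl
  have hidem : ∀ v, π (π v) = π v := by
    intro v
    exact hleft _ (Submodule.coe_mem _)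
  rcases idem_zero_or_id hc π hidem with h | h
  · left
    rw [Submodule.eq_bot_iff]
    intro z hz
    have := hleft z hz
    rw [h, LinearMap.zero_apply] at this
    exact this.symm
  · right
    rw [Submodule.eq_bot_iff]
    intro w hw
    have := hright w hw
    rw [h, LinearMap.id_apply] at this
    exact this

end Indecomposable

section Iso

variable {c c' : Q}

lemma hom_apply (φ : MQ Q c →ₗ[Rq Q] MQ Q c') (v : MQ Q c) :
    φ v = algQ (MQ.fst v) • φ (MQ.mk c 1 0) + algQ (MQ.snd v) • φ (MQ.mk c 0 1) := by
  conv_lhs => rw [MQ_decomp c v]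
  rw [map_add, map_smul, map_smul]

lemma hom_rel (φ : MQ Q c →ₗ[Rq Q] MQ Q c') :
    c' * MQ.snd (φ (MQ.mk c 1 0)) = 0 ∧
      c * MQ.fst (φ (MQ.mk c 1 0)) = c' * MQ.snd (φ (MQ.mk c 0 1)) := by
  have hx1 : (xR Q) • (MQ.mk c 1 0) = 0 := by
    rw [MQ_x_smul]; simp
  have hx2 : (xR Q) • (MQ.mk c 0 1) = MQ.mk c (-c) 0 := by
    rw [MQ_x_smul]; simp
  constructor
  · have e1 : (0 : MQ Q c') = xR Q • φ (MQ.mk c 1 0) := by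
      rw [← map_smul, hx1, map_zero]
    rw [MQ_x_smul] at e1
    have h := congrArg MQ.fst e1.symm
    simpa [neg_eq_zero] using h
  · have e2 : φ (xR Q • MQ.mk c 0 1) = xR Q • φ (MQ.mk c 0 1) := map_smul φ _ _
    rw [hx2, MQ_x_smul, hom_apply φ (MQ.mk c (-c) 0)] at e2
    simp only [MQ.fst_mk, MQ.snd_mk] at e2
    rw [MQ_algQ_smul, MQ_algQ_smul] at e2
    have h := congrArg MQ.fst e2
    simp only [MQ.fst_add, MQ.fst_mk] at h
    linear_combination -h

lemma iso_dvd (ψ : MQ Q c ≃ₗ[Rq Q] MQ Q c') : ∃ t : Q, c = c' * t := by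
  set φ : MQ Q c →ₗ[Rq Q] MQ Q c' := ψ.toLinearMap with hφ
  set φ' : MQ Q c' →ₗ[Rq Q] MQ Q c := ψ.symm.toLinearMap with hφ'
  obtain ⟨hg', had'⟩ := hom_rel φ'
  have hid : φ' (φ (MQ.mk c 0 1)) = MQ.mk c 0 1 := ψ.symm_apply_apply _
  have hw : φ (MQ.mk c 0 1) =
      MQ.mk c' (MQ.fst (φ (MQ.mk c 0 1))) (MQ.snd (φ (MQ.mk c 0 1))) := rfl
  rw [hw, hom_apply φ' (MQ.mk c' (MQ.fst (φ (MQ.mk c 0 1))) (MQ.snd (φ (MQ.mk c 0 1))))]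
    at hid
  rw [MQ_algQ_smul, MQ_algQ_smul] at hid
  have hsnd := congrArg MQ.snd hid
  simp only [MQ.snd_add, MQ.snd_mk, MQ.fst_mk] at hsnd
  refine ⟨MQ.snd (φ (MQ.mk c 0 1)) * MQ.fst (φ' (MQ.mk c' 1 0)), ?_⟩
  linear_combination (-c) * hsnd + MQ.fst (φ (MQ.mk c 0 1)) * hg' -
    MQ.snd (φ (MQ.mk c 0 1)) * had'

end Iso

section TotRefMQ

variable {c : Q}

/-- The projection `R² → MQ c`. -/
def phiMQ (c : Q) : (Rq Q × Rq Q) →ₗ[Rq Q] MQ Q c where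
  toFun w := w.1 • MQ.mk c 1 0 + w.2 • MQ.mk c 0 1
  map_add' v w := by
    simp only [Prod.fst_add, Prod.snd_add, add_smul]
    abel
  map_smul' r v := by
    simp only [Prod.smul_fst, Prod.smul_snd, smul_eq_mul, mul_smul, RingHom.id_apply,
      smul_add]

lemma phiMQ_surj (c : Q) : Function.Surjective (phiMQ c) := by
  intro v
  refine ⟨(algQ (MQ.fst v), algQ (MQ.snd v)), ?_⟩
  show algQ (MQ.fst v) • MQ.mk c 1 0 + algQ (MQ.snd v) • MQ.mk c 0 1 = v
  exact (MQ_decomp c v).symm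

lemma phiMQ_ker (c : Q) :
    LinearMap.ker (phiMQ c) = LinearMap.range (Lmap Q (algQ c)) := by
  ext w
  simp only [LinearMap.mem_ker, LinearMap.mem_range]
  constructor
  · intro hw
    obtain ⟨f1, hf1⟩ := mkR_surj w.1
    obtain ⟨f2, hf2⟩ := mkR_surj w.2
    have hφ : phiMQ c w = MQ.mk c (coeff 0 f1 - c * coeff 1 f2) (coeff 0 f2) := by
      show w.1 • MQ.mk c 1 0 + w.2 • MQ.mk c 0 1 = _
      rw [← hf1, ← hf2, MQ_smul_mk, MQ_smul_mk]
      apply MQ.ext <;>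
        simp only [MQ.fst_add, MQ.snd_add, MQ.fst_mk, MQ.snd_mk] <;> ring
    rw [hφ] at hw
    have h1 : coeff 0 f1 - c * coeff 1 f2 = 0 := by
      have := congrArg MQ.fst hw
      simp only [MQ.fst_mk, MQ.fst_zero] at this
      exact this
    have h2 : coeff 0 f2 = 0 := by
      have := congrArg MQ.snd hw
      simp only [MQ.snd_mk, MQ.snd_zero] at this
      exact this
    obtain ⟨h, hh⟩ := exists_eq_X_mul h2
    have hc0 : coeff 0 (f1 - C c * h) = 0 := by
      have hch : coeff 0 (C c * h) = c * coeff 0 h := by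
        rw [coeff_zero_mul']; simp
      have hf21 : coeff 1 f2 = coeff 0 h := by
        rw [hh, coeff_succ_X_mul]
      rw [map_sub, hch, ← hf21]
      linear_combination h1
    obtain ⟨k, hk⟩ := exists_eq_X_mul hc0
    refine ⟨(mkR Q k, mkR Q h), ?_⟩
    rw [Lmap_apply]
    have c1 : xR Q * mkR Q k + algQ c * mkR Q h = w.1 := by
      have hf1' : X * k + C c * h = f1 := by linear_combination -hk
      rw [← hf1, ← hf1', xR_eq, algQ, RingHom.comp_apply, map_add, map_mul, map_mul]
    have c2 : xR Q * mkR Q h = w.2 := by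
      rw [← hf2, hh, xR_eq, map_mul]
    exact Prod.ext c1 c2
  · rintro ⟨w', rfl⟩
    obtain ⟨g1, hg1⟩ := mkR_surj w'.1
    obtain ⟨g2, hg2⟩ := mkR_surj w'.2
    have hL : Lmap Q (algQ c) w' = (mkR Q (X * g1 + C c * g2), mkR Q (X * g2)) := by
      rw [Lmap_apply]
      apply Prod.ext
      · show xR Q * w'.1 + algQ c * w'.2 = _
        rw [← hg1, ← hg2, xR_eq, algQ, RingHom.comp_apply, map_add, map_mul, map_mul]
      · show xR Q * w'.2 = _
        rw [← hg2, xR_eq, map_mul]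
    rw [hL]
    show mkR Q (X * g1 + C c * g2) • MQ.mk c 1 0 + mkR Q (X * g2) • MQ.mk c 0 1 = 0
    rw [MQ_smul_mk, MQ_smul_mk]
    apply MQ.ext
    · have e0 : coeff 0 (X * g1 + C c * g2) = c * coeff 0 g2 := by
        rw [map_add, coeff_zero_mul']
        simp
      have e1 : coeff 1 (X * g2) = coeff 0 g2 := coeff_succ_X_mul 0 g2
      simp [e0, e1]
    · have e0 : coeff 0 (X * g2) = 0 := by
        rw [coeff_zero_mul']; simp
      simp [e0]

lemma MQ_totref (c : Q) :
    IsTotallyReflexive (Rq Q) (ModuleCat.of (Rq Q) (MQ Q c)) := by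
  refine ⟨fun _ => ModuleCat.of (Rq Q) (Rq Q × Rq Q),
    fun i => ModuleCat.ofHom (if Even i then Lmap Q (algQ c) else Lmap Q (-(algQ c))),
    ?_, ?_, ?_, ?_, ?_⟩
  · intro i
    exact inferInstanceAs (Module.Free (Rq Q) (Rq Q × Rq Q))
  · intro i
    exact inferInstanceAs (Module.Finite (Rq Q) (Rq Q × Rq Q))
  · intro i
    beta_reduce
    by_cases he : Even i
    · rw [if_pos he, if_neg (by simpa [Int.even_add_one] using he)]
      exact (ker_Lmap (algQ c)).symm
    · rw [if_neg he, if_pos (Int.even_add_one.mpr he)]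
      have := (ker_Lmap (-(algQ c))).symm
      rwa [neg_neg] at this
  · intro i
    beta_reduce
    by_cases he : Even i
    · rw [if_pos he, if_neg (by simpa [Int.even_add_one] using he)]
      exact dual_Lmap (algQ c)
    · rw [if_neg he, if_pos (Int.even_add_one.mpr he)]
      have := dual_Lmap (-(algQ c))
      rwa [neg_neg] at this
  · have h0 : (if Even (0 : ℤ) then Lmap Q (algQ c) else Lmap Q (-(algQ c))) =
        Lmap Q (algQ c) := if_pos Even.zero
    simp only [h0]
    exact ⟨(LinearMap.quotKerEquivOfSurjective (phiMQ c) (phiMQ_surj c)).symm.trans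
      (Submodule.quotEquivOfEq _ _ (phiMQ_ker c))⟩

end TotRefMQ

section PartA

lemma range_eq_ker_toSpan :
    LinearMap.range (LinearMap.toSpanSingleton (Rq Q) (Rq Q) (xR Q)) =
      LinearMap.ker (LinearMap.toSpanSingleton (Rq Q) (Rq Q) (xR Q)) := by
  ext r
  simp only [LinearMap.mem_range, LinearMap.mem_ker, LinearMap.toSpanSingleton_apply,
    smul_eq_mul]
  constructor
  · rintro ⟨t, rfl⟩
    calc t * xR Q * xR Q = t * (xR Q * xR Q) := by ring
    _ = 0 := by rw [x_mul_x, mul_zero]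
  · intro h
    rw [ann_x, Ideal.mem_span_singleton] at h
    obtain ⟨t, rfl⟩ := h
    exact ⟨t, by ring⟩

lemma dual_eval (f : Module.Dual (Rq Q) (Rq Q)) (r : Rq Q) : f r = r * f 1 := by
  conv_lhs => rw [show r = r • (1 : Rq Q) by simp]
  rw [map_smul, smul_eq_mul]

lemma dual_toSpan :
    LinearMap.range
        (LinearMap.dualMap (LinearMap.toSpanSingleton (Rq Q) (Rq Q) (xR Q))) =
      LinearMap.ker
        (LinearMap.dualMap (LinearMap.toSpanSingleton (Rq Q) (Rq Q) (xR Q))) := by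
  ext f
  simp only [LinearMap.mem_range, LinearMap.mem_ker]
  constructor
  · rintro ⟨g, rfl⟩
    apply LinearMap.ext
    intro r
    have hzero : (LinearMap.toSpanSingleton (Rq Q) (Rq Q) (xR Q))
        ((LinearMap.toSpanSingleton (Rq Q) (Rq Q) (xR Q)) r) = 0 := by
      rw [LinearMap.toSpanSingleton_apply, LinearMap.toSpanSingleton_apply,
        smul_eq_mul, smul_eq_mul]
      calc r * xR Q * xR Q = r * (xR Q * xR Q) := by ring
      _ = 0 := by rw [x_mul_x, mul_zero]
    rw [LinearMap.dualMap_apply, LinearMap.dualMap_apply, LinearMap.zero_apply, hzero,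
      map_zero]
  · intro hf
    have hfx : f 1 * xR Q = 0 := by
      have := LinearMap.congr_fun hf 1
      rw [LinearMap.dualMap_apply, LinearMap.toSpanSingleton_apply, smul_eq_mul,
        one_mul, LinearMap.zero_apply, dual_eval f (xR Q)] at this
      rw [mul_comm]
      exact this
    rw [ann_x, Ideal.mem_span_singleton] at hfx
    obtain ⟨t, ht⟩ := hfx
    refine ⟨LinearMap.toSpanSingleton (Rq Q) (Rq Q) t, ?_⟩
    apply LinearMap.ext
    intro r
    rw [LinearMap.dualMap_apply, LinearMap.toSpanSingleton_apply,
      LinearMap.toSpanSingleton_apply, dual_eval f r, ht, smul_eq_mul, smul_eq_mul]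
    ring

lemma totref_A :
    IsTotallyReflexive (Rq Q)
      (ModuleCat.of (Rq Q) ((Rq Q) ⧸ (Ideal.span {xR Q}))) := by
  refine ⟨fun _ => ModuleCat.of (Rq Q) (Rq Q),
    fun _ => ModuleCat.ofHom (LinearMap.toSpanSingleton (Rq Q) (Rq Q) (xR Q)),
    fun _ => inferInstanceAs (Module.Free (Rq Q) (Rq Q)),
    fun _ => inferInstanceAs (Module.Finite (Rq Q) (Rq Q)),
    fun _ => range_eq_ker_toSpan,
    fun _ => dual_toSpan, ?_⟩
  exact ⟨Submodule.quotEquivOfEq _ _ (LinearMap.span_singleton_eq_range _ _ _)⟩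

lemma Rq_nontrivial [Nontrivial Q] : Nontrivial (Rq Q) := by
  apply nontrivial_of_ne (1 : Rq Q) 0
  intro h
  have : mkR Q 1 = 0 := h
  rw [mkR_eq_zero] at this
  simpa using this.1

lemma not_free [Nontrivial Q] :
    ¬ Module.Free (Rq Q) ((Rq Q) ⧸ (Ideal.span {xR Q})) := by
  intro hfree
  have hRnt : Nontrivial (Rq Q) := Rq_nontrivial
  have hx_kill : ∀ v : (Rq Q) ⧸ (Ideal.span {xR Q}), xR Q • v = 0 := by
    intro v
    obtain ⟨r, rfl⟩ := Submodule.Quotient.mk_surjective _ v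
    rw [← Submodule.Quotient.mk_smul, Submodule.Quotient.mk_eq_zero]
    rw [smul_eq_mul]
    exact Ideal.mem_span_singleton.mpr (Dvd.intro r rfl)
  let b := Module.Free.chooseBasis (Rq Q) ((Rq Q) ⧸ (Ideal.span {xR Q}))
  rcases isEmpty_or_nonempty
      (Module.Free.ChooseBasisIndex (Rq Q) ((Rq Q) ⧸ (Ideal.span {xR Q}))) with h | h
  · have hsub : Subsingleton ((Rq Q) ⧸ (Ideal.span {xR Q})) := b.repr.toEquiv.subsingleton
    have h1 : (Submodule.Quotient.mk (1 : Rq Q) :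
        (Rq Q) ⧸ (Ideal.span {xR Q})) = 0 := Subsingleton.elim _ _
    rw [Submodule.Quotient.mk_eq_zero, Ideal.mem_span_singleton] at h1
    obtain ⟨t, ht⟩ := h1
    have : xR Q = 0 := by
      calc xR Q = 1 * xR Q := (one_mul _).symm
      _ = xR Q * t * xR Q := by rw [ht]
      _ = t * (xR Q * xR Q) := by ring
      _ = 0 := by rw [x_mul_x, mul_zero]
    exact x_ne_zero this
  · obtain ⟨i⟩ := h
    have h0 : xR Q • b i = 0 := hx_kill _
    have hrepr := congrArg b.repr h0
    rw [map_smul, map_zero, Module.Basis.repr_self] at hrepr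
    have := congrArg (fun f => f i) hrepr
    simp only [Finsupp.smul_apply, Finsupp.single_eq_same, smul_eq_mul, mul_one,
      Finsupp.coe_zero, Pi.zero_apply] at this
    exact x_ne_zero this

end PartA

section Choice

lemma exists_nonnilpotent [IsLocalRing Q] (hdim : 0 < ringKrullDim Q) :
    ∃ q : Q, q ∈ IsLocalRing.maximalIdeal Q ∧ ¬ IsNilpotent q := by
  by_contra hcon
  push_neg at hcon
  have key : ∀ p : PrimeSpectrum Q, p.asIdeal = IsLocalRing.maximalIdeal Q := by
    intro p
    apply le_antisymm
    · exact IsLocalRing.le_maximalIdeal p.isPrime.ne_top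
    · intro a ha
      obtain ⟨n, hn⟩ := hcon a ha
      exact p.isPrime.mem_of_pow_mem n (by rw [hn]; exact zero_mem _)
  have hsub : Subsingleton (PrimeSpectrum Q) :=
    ⟨fun p p' => PrimeSpectrum.ext ((key p).trans (key p').symm)⟩
  have hle : ringKrullDim Q ≤ 0 := Order.krullDim_nonpos_of_subsingleton
  exact absurd hdim (not_lt.mpr hle)

lemma pow_not_dvd [IsLocalRing Q] {q : Q}
    (hqm : q ∈ IsLocalRing.maximalIdeal Q) (hq : ¬ IsNilpotent q)
    {n m : ℕ} (hlt : n < m) (t : Q) : q ^ n ≠ q ^ m * t := by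
  intro h
  have hsplit : q ^ m = q ^ n * q ^ (m - n) := by
    rw [← pow_add]; congr 1; omega
  have hzero : q ^ n * (1 - q ^ (m - n) * t) = 0 := by
    rw [mul_sub, mul_one]
    rw [show q ^ n * (q ^ (m - n) * t) = q ^ n * q ^ (m - n) * t by ring, ← hsplit, ← h]
    ring
  have hu : IsUnit (1 - q ^ (m - n) * t) := by
    apply isUnit_one_sub_of_nonunit
    intro hun
    have h1 : IsUnit (q ^ (m - n)) := isUnit_of_mul_isUnit_left hun
    obtain ⟨k, hk⟩ : ∃ k, m - n = k + 1 := ⟨m - n - 1, by omega⟩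
    rw [hk, pow_succ] at h1
    have h2 : IsUnit q := isUnit_of_mul_isUnit_right h1
    exact absurd h2 (mem_nonunits_iff.mp ((IsLocalRing.mem_maximalIdeal q).mp hqm))
  exact hq ⟨n, eq_zero_of_mul_unit hzero hu⟩

end Choice

end TotRefAux

/-- For `Q` local of positive Krull dimension and `R = Q⟦X⟧/(X²)`: the module `R/(X)`
is totally reflexive and not free, and there are infinitely many pairwise
non-isomorphic indecomposable totally reflexive `R`-modules. -/
theorem powerSeries_mod_X_sq
    (Q : Type u) [CommRing Q] [IsLocalRing Q] [IsNoetherianRing Q]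
    (hdim : 0 < ringKrullDim Q) :
    IsTotallyReflexive (Rq Q)
      (ModuleCat.of (Rq Q) ((Rq Q) ⧸ (Ideal.span {xR Q}))) ∧
    ¬ Module.Free (Rq Q) ((Rq Q) ⧸ (Ideal.span {xR Q})) ∧
    ∃ G : ℕ → ModuleCat.{u} (Rq Q),
      (∀ m, IsTotallyReflexive (Rq Q) (G m) ∧ IsIndecomposable (Rq Q) (G m)) ∧
      ∀ m m', m ≠ m' → IsEmpty (G m ≃ₗ[Rq Q] G m') := by
  classical
  refine ⟨TotRefAux.totref_A, TotRefAux.not_free, ?_⟩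
  obtain ⟨q, hqm, hq⟩ := TotRefAux.exists_nonnilpotent hdim
  refine ⟨fun m => ModuleCat.of (Rq Q) (TotRefAux.MQ Q (q ^ m)), ?_, ?_⟩
  · intro m
    refine ⟨TotRefAux.MQ_totref _, ?_, ?_⟩
    · exact inferInstanceAs (Nontrivial (TotRefAux.MQ Q (q ^ m)))
    · intro Z W h
      exact TotRefAux.MQ_indec (fun h0 => hq ⟨m, h0⟩) Z W h
  · intro m m' hne
    constructor
    intro ψ
    rcases Nat.lt_or_ge m m' with hlt | hge
    · obtain ⟨t, ht⟩ := TotRefAux.iso_dvd ψ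
      exact TotRefAux.pow_not_dvd hqm hq hlt t ht
    · have hlt : m' < m := lt_of_le_of_ne hge (Ne.symm hne)
      obtain ⟨t, ht⟩ := TotRefAux.iso_dvd ψ.symm
      exact TotRefAux.pow_not_dvd hqm hq hlt t ht
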